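/- For every x > 0, 1/(2x) ≤ log x − ψ(x) ≤ 1/x, where ψ is the digamma function. -/

import Mathlib

/-- The digamma function `ψ(x) = d/dx log Γ(x)`. -/
noncomputable def digamma (x : ℝ) : ℝ := deriv (fun y => Real.log (Real.Gamma y)) x

open Real Set Filter Topology

namespace DigammaAux

noncomputable def f : ℝ → ℝ := fun y => Real.log (Real.Gamma y)

lemma hder {x : ℝ} (hx : 0 < x) : DifferentiableAt ℝ f x := by
  refine (Real.differentiableAt_Gamma ?_).log (Real.Gamma_ne_zero ?_) <;>
  exact fun m => ne_of_gt (by have := Nat.cast_nonneg (α := ℝ) m; linarith)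

lemma h_rec (x : ℝ) (hx : 0 < x) : f (x + 1) = f x + Real.log x := by
  simp only [f, Real.Gamma_add_one hx.ne',
    Real.log_mul hx.ne' (Real.Gamma_pos_of_pos hx).ne', add_comm]

lemma hc : ConvexOn ℝ (Ioi (0:ℝ)) f := Real.convexOn_log_Gamma

lemma digamma_rec {x : ℝ} (hx : 0 < x) : digamma (x + 1) = digamma x + 1 / x := by
  show deriv f (x + 1) = deriv f x + 1 / x
  rw [← deriv_comp_add_const, one_div, ← Real.deriv_log,
    ← deriv_add (hder hx) (Real.differentiableAt_log hx.ne')]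
  apply Filter.EventuallyEq.deriv_eq
  filter_upwards [eventually_gt_nhds hx] using h_rec

lemma digamma_le_log {x : ℝ} (hx : 0 < x) : digamma x ≤ Real.log x := by
  have h := hc.deriv_le_slope (mem_Ioi.mpr hx)
    (mem_Ioi.mpr (by linarith : (0:ℝ) < x + 1)) (by linarith) (hder hx)
  rwa [slope_def_field, h_rec x hx, show x + 1 - x = (1:ℝ) by ring, div_one,
    add_sub_cancel_left] at h

lemma log_le_digamma_add_one {x : ℝ} (hx : 0 < x) : Real.log x ≤ digamma (x + 1) := by
  have h := hc.slope_le_deriv (mem_Ioi.mpr hx)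
    (mem_Ioi.mpr (by linarith : (0:ℝ) < x + 1)) (by linarith) (hder (by linarith))
  rwa [slope_def_field, h_rec x hx, show x + 1 - x = (1:ℝ) by ring, div_one,
    add_sub_cancel_left] at h

lemma upper {x : ℝ} (hx : 0 < x) : Real.log x - digamma x ≤ 1 / x := by
  have h := log_le_digamma_add_one hx
  rw [digamma_rec hx] at h
  linarith

lemma log_sub_one_le_digamma {x : ℝ} (hx : 1 < x) : Real.log (x - 1) ≤ digamma x := by
  have h0 : (0:ℝ) < x - 1 := by linarith
  have h := log_le_digamma_add_one h0
  rwa [sub_add_cancel] at h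

/-- `log u ≤ (u - 1/u)/2` for `u ≥ 1`. -/
lemma log_le_half (u : ℝ) (hu : 1 ≤ u) : Real.log u ≤ (u - 1/u) / 2 := by
  set g : ℝ → ℝ := fun w => (w - w⁻¹) / 2 - Real.log w with hg
  have hd : ∀ v ∈ interior (Ici (1:ℝ)), 0 ≤ deriv g v := by
    intro v hv
    rw [interior_Ici, mem_Ioi] at hv
    have hv0 : (0:ℝ) < v := by linarith
    have hdv : HasDerivAt g ((1 + (v^2)⁻¹)/2 - v⁻¹) v := by
      refine ((((hasDerivAt_id v).sub (hasDerivAt_inv hv0.ne')).div_const 2).sub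
        (Real.hasDerivAt_log hv0.ne')).congr_deriv ?_
      ring
    rw [hdv.deriv]
    have he : (1 + (v^2)⁻¹)/2 - v⁻¹ = (v - 1)^2 / (2 * v^2) := by
      field_simp
      ring
    rw [he]
    positivity
  have hdiff : ∀ v ∈ Ici (1:ℝ), DifferentiableAt ℝ g v := by
    intro v hv
    have hv0 : (0:ℝ) < v := lt_of_lt_of_le one_pos hv
    exact ((differentiableAt_id.sub (differentiableAt_inv hv0.ne')).div_const 2).sub
      (Real.differentiableAt_log hv0.ne')
  have hmono : MonotoneOn g (Ici (1:ℝ)) := by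
    apply monotoneOn_of_deriv_nonneg (convex_Ici 1) ?_ ?_ hd
    · exact fun v hv => (hdiff v hv).continuousAt.continuousWithinAt
    · exact fun v hv => (hdiff v (interior_subset hv)).differentiableWithinAt
  have h1 : g 1 ≤ g u := hmono (le_refl (1:ℝ)) hu hu
  simp only [g] at h1
  norm_num at h1
  rw [one_div]
  linarith

/-- key trapezoid inequality. -/
lemma trapezoid {y : ℝ} (hy : 0 < y) :
    Real.log (y + 1) - Real.log y ≤ 1 / (2 * y) + 1 / (2 * (y + 1)) := by
  have hu : (1:ℝ) ≤ (y + 1) / y := by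
    rw [le_div_iff₀ hy]; linarith
  have h := log_le_half _ hu
  rw [Real.log_div (by linarith) hy.ne'] at h
  have he : ((y + 1)/y - 1/((y + 1)/y)) / 2 = 1 / (2 * y) + 1 / (2 * (y + 1)) := by
    field_simp
    ring
  rw [he] at h
  exact h

noncomputable def F : ℝ → ℝ := fun y => Real.log y - 1 / (2 * y) - digamma y

lemma F_step {y : ℝ} (hy : 0 < y) : F (y + 1) ≤ F y := by
  have h := trapezoid hy
  have hrec := digamma_rec hy
  simp only [F, hrec]
  have hy2 : 1 / y = 1 / (2 * y) + 1 / (2 * y) := by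
    rw [← add_div]
    rw [div_eq_div_iff hy.ne' (by positivity : (2:ℝ) * y ≠ 0)]
    ring
  linarith

lemma F_iter {x : ℝ} (hx : 0 < x) (n : ℕ) : F (x + n) ≤ F x := by
  induction n with
  | zero => simp
  | succ n ih =>
    have h := F_step (by positivity : (0:ℝ) < x + n)
    push_cast
    calc F (x + (n + 1)) = F ((x + n) + 1) := by ring_nf
    _ ≤ F (x + n) := h
    _ ≤ F x := ih

lemma F_lower {y : ℝ} (hy : 0 < y) : -(1 / (2 * y)) ≤ F y := by
  have := digamma_le_log hy
  simp only [F]; linarith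

lemma F_upper {y : ℝ} (hy : 1 < y) : F y ≤ 1 / (y - 1) := by
  have h1 : Real.log (y - 1) ≤ digamma y := log_sub_one_le_digamma hy
  have h2 : Real.log y - Real.log (y - 1) ≤ 1 / (y - 1) := by
    have h0 : (0:ℝ) < y - 1 := by linarith
    have := Real.log_le_sub_one_of_pos (show (0:ℝ) < y / (y - 1) by positivity)
    rw [Real.log_div (by linarith) h0.ne'] at this
    have he : y / (y - 1) - 1 = 1 / (y - 1) := by field_simp; ring
    linarith
  have h3 : 0 < 1 / (2 * y) := by positivity
  simp only [F]; linarith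

lemma F_tendsto {x : ℝ} (hx : 0 < x) :
    Tendsto (fun n : ℕ => F (x + n)) atTop (𝓝 0) := by
  have h1 : Tendsto (fun n : ℕ => x + (n:ℝ)) atTop atTop :=
    tendsto_atTop_add_const_left _ _ tendsto_natCast_atTop_atTop
  have hlo : Tendsto (fun n : ℕ => -(1 / (2 * (x + (n:ℝ))))) atTop (𝓝 0) := by
    rw [show (0:ℝ) = -0 by norm_num]
    apply Tendsto.neg
    simp only [one_div]
    exact Tendsto.comp tendsto_inv_atTop_zero
      (Tendsto.const_mul_atTop (by norm_num : (0:ℝ) < 2) h1)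
  have hhi : Tendsto (fun n : ℕ => 1 / (x + (n:ℝ) - 1)) atTop (𝓝 0) := by
    simp only [one_div]
    exact Tendsto.comp tendsto_inv_atTop_zero
      (tendsto_atTop_add_const_right _ _ h1)
  apply tendsto_of_tendsto_of_tendsto_of_le_of_le' hlo hhi
  · filter_upwards with n
    exact F_lower (by positivity)
  · filter_upwards [eventually_ge_atTop 1] with n hn
    have : (1:ℝ) < x + n := by
      have : (1:ℝ) ≤ (n:ℝ) := by exact_mod_cast hn
      linarith
    exact F_upper this

lemma lower {x : ℝ} (hx : 0 < x) : 1 / (2 * x) ≤ Real.log x - digamma x := by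
  have h0 : 0 ≤ F x :=
    le_of_tendsto (F_tendsto hx) (Filter.Eventually.of_forall fun n => F_iter hx n)
  simp only [F] at h0
  linarith

end DigammaAux

theorem stmt2 :
    ∀ x : ℝ, 0 < x →
      1 / (2 * x) ≤ Real.log x - digamma x ∧ Real.log x - digamma x ≤ 1 / x := by
  intro x hx
  exact ⟨DigammaAux.lower hx, DigammaAux.upper hx⟩
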